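/- arXiv:1101.3286 — 4 statements merged into one kernel-verified Lean document; each statement's English description precedes it below -/
import Mathlib

section
/- Let Y be a random variable with E[Y] = 0 and finite second moment σ² := E[Y²]. For all positive reals a, b, one has P(Y ∉ (-a, b)) ≤ (4σ² + (a-b)²)/(a+b)². -/
open MeasureTheory ProbabilityTheory

theorem between_chebyshev_cantelli
    {Ω : Type*} [MeasureSpace Ω] [IsProbabilityMeasure (ℙ : Measure Ω)]
    (Y : Ω → ℝ) (hY : Measurable Y)
    (hint : Integrable Y) (hint2 : Integrable (fun ω => (Y ω) ^ 2))
    (hmean : ∫ ω, Y ω = 0)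
    (σ2 : ℝ) (hσ2 : σ2 = ∫ ω, (Y ω) ^ 2)
    (a b : ℝ) (ha : 0 < a) (hb : 0 < b) :
    (ℙ {ω | Y ω ∉ Set.Ioo (-a) b}).toReal ≤ (4 * σ2 + (a - b) ^ 2) / (a + b) ^ 2 := by
  set c : ℝ := (b - a) / 2 with hc
  set t : ℝ := (a + b) / 2 with ht
  have htpos : 0 < t := by rw [ht]; linarith
  have hfun : (fun ω => (Y ω - c) ^ 2) = fun ω => ((Y ω) ^ 2 - (2 * c) * Y ω) + c ^ 2 := by
    funext ω; ring
  have hf_int : Integrable (fun ω => (Y ω - c) ^ 2) := by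
    rw [hfun]
    exact (hint2.sub (hint.const_mul _)).add (integrable_const _)
  have hint_f : ∫ ω, (Y ω - c) ^ 2 = σ2 + c ^ 2 := by
    have hI1 : Integrable (fun ω => (Y ω) ^ 2 - (2 * c) * Y ω) := by
      exact hint2.sub (hint.const_mul _)
    have hI2 : Integrable (fun ω => (2 * c) * Y ω) := hint.const_mul _
    rw [hfun, integral_add hI1 (integrable_const _), integral_sub hint2 hI2,
      MeasureTheory.integral_const_mul, hmean, integral_const]
    simp [hσ2]
  have hsub : {ω | Y ω ∉ Set.Ioo (-a) b} ⊆ {ω | t ^ 2 ≤ (Y ω - c) ^ 2} := by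
    intro ω hω
    simp only [Set.mem_Ioo, not_and_or, not_lt, Set.mem_setOf_eq] at hω ⊢
    have habs : t ≤ |Y ω - c| := by
      rcases hω with h | h
      · have h1 : t ≤ c - Y ω := by rw [hc, ht]; linarith
        calc t ≤ c - Y ω := h1
          _ ≤ |Y ω - c| := by rw [abs_sub_comm]; exact le_abs_self _
      · have h1 : t ≤ Y ω - c := by rw [hc, ht]; linarith
        exact h1.trans (le_abs_self _)
    calc t ^ 2 ≤ |Y ω - c| ^ 2 := by
          exact pow_le_pow_left₀ htpos.le habs 2
      _ = (Y ω - c) ^ 2 := sq_abs _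
  have hmarkov := mul_meas_ge_le_integral_of_nonneg (μ := ℙ)
    (ae_of_all _ fun ω => sq_nonneg (Y ω - c)) hf_int (t ^ 2)
  rw [hint_f] at hmarkov
  have hmono : (ℙ {ω | Y ω ∉ Set.Ioo (-a) b}).toReal
      ≤ (ℙ {ω | t ^ 2 ≤ (Y ω - c) ^ 2}).toReal :=
    ENNReal.toReal_mono (measure_ne_top _ _) (measure_mono hsub)
  have ht2 : 0 < t ^ 2 := by positivity
  have key : (ℙ {ω | t ^ 2 ≤ (Y ω - c) ^ 2}).toReal ≤ (σ2 + c ^ 2) / t ^ 2 := by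
    rw [le_div_iff₀ ht2]
    rw [measureReal_def] at hmarkov
    linarith [hmarkov]
  have heq : (σ2 + c ^ 2) / t ^ 2 = (4 * σ2 + (a - b) ^ 2) / (a + b) ^ 2 := by
    rw [hc, ht]
    have hab : (0:ℝ) < a + b := by linarith
    field_simp
    ring
  linarith [hmono, key, heq.symm.le, heq.le]
end

section
/- For any positive real numbers x, x₁, x₂ with x ≥ max(x₁, x₂), one has x₁·Ψ(x) ≤ Ψ*(x₂), where Ψ := 1 - Φ is the standard normal tail function and Ψ*(x) := 0.17 for 0 < x < 0.752 and Ψ*(x) := x·Ψ(x) for x ≥ 0.752. -/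
noncomputable def stdNormalCDF (x : ℝ) : ℝ :=
  ∫ t in Set.Iic x, (Real.sqrt (2 * Real.pi))⁻¹ * Real.exp (-t ^ 2 / 2)

noncomputable def Psi (x : ℝ) : ℝ := 1 - stdNormalCDF x

noncomputable def PsiStar (x : ℝ) : ℝ :=
  if x < 0.752 then 0.17 else x * Psi x

open MeasureTheory Set Filter

noncomputable def npdf (t : ℝ) : ℝ := (Real.sqrt (2 * Real.pi))⁻¹ * Real.exp (-t ^ 2 / 2)

lemma sqrt2pi_pos : 0 < Real.sqrt (2 * Real.pi) :=
  Real.sqrt_pos.mpr (by positivity)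

lemma npdf_pos (t : ℝ) : 0 < npdf t := by
  unfold npdf
  positivity

lemma continuous_npdf : Continuous npdf := by
  unfold npdf
  fun_prop

lemma integrable_npdf : Integrable npdf := by
  have h : npdf = fun t => (Real.sqrt (2 * Real.pi))⁻¹ * Real.exp (-(1/2) * t ^ 2) := by
    funext t; unfold npdf; ring_nf
  rw [h]
  exact (integrable_exp_neg_mul_sq (by norm_num : (0:ℝ) < 1/2)).const_mul _

lemma integral_npdf : ∫ t, npdf t = 1 := by
  have h : ∫ t : ℝ, Real.exp (-(1/2) * t ^ 2) = Real.sqrt (Real.pi / (1/2)) :=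
    integral_gaussian (1/2)
  have h2 : ∫ t, npdf t = (Real.sqrt (2 * Real.pi))⁻¹ * ∫ t : ℝ, Real.exp (-(1/2) * t ^ 2) := by
    rw [← integral_const_mul]
    congr 1; funext t; unfold npdf; ring_nf
  rw [h2, h]
  rw [show Real.pi / (1/2) = 2 * Real.pi by ring]
  field_simp

lemma cdf_eq (x : ℝ) : stdNormalCDF x = ∫ t in Iic x, npdf t := rfl

lemma cdf_sub (a x : ℝ) : stdNormalCDF x - stdNormalCDF a = ∫ t in a..x, npdf t := by
  rw [cdf_eq, cdf_eq]
  exact intervalIntegral.integral_Iic_sub_Iic integrable_npdf.integrableOn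
    integrable_npdf.integrableOn

lemma cdf_zero : stdNormalCDF 0 = 1 / 2 := by
  have heven : ∀ t : ℝ, npdf (-t) = npdf t := by
    intro t; unfold npdf; rw [show (-t) ^ 2 = t ^ 2 by ring]
  have h1 : ∫ t in Iic (0:ℝ), npdf t = ∫ t in Ioi (0:ℝ), npdf t := by
    have := integral_comp_neg_Iic (0:ℝ) npdf
    simp only [heven, neg_zero] at this
    exact this
  have h2 : (∫ t in Iic (0:ℝ), npdf t) + ∫ t in Ioi (0:ℝ), npdf t = 1 := by
    rw [← integral_npdf, ← Set.compl_Iic]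
    exact integral_add_compl measurableSet_Iic integrable_npdf
  rw [cdf_eq]
  linarith

lemma psi_eq_integral (x : ℝ) : Psi x = ∫ t in Ioi x, npdf t := by
  unfold Psi
  rw [cdf_eq]
  have h2 : (∫ t in Iic x, npdf t) + ∫ t in Ioi x, npdf t = 1 := by
    rw [← integral_npdf, ← Set.compl_Iic]
    exact integral_add_compl measurableSet_Iic integrable_npdf
  linarith

lemma psi_nonneg (x : ℝ) : 0 ≤ Psi x := by
  rw [psi_eq_integral]
  exact setIntegral_nonneg measurableSet_Ioi fun t _ => (npdf_pos t).le

lemma psi_eq_half_sub (x : ℝ) : Psi x = 1 / 2 - ∫ t in (0:ℝ)..x, npdf t := by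
  have := cdf_sub 0 x
  rw [cdf_zero] at this
  unfold Psi
  linarith

lemma psi_le_half (x : ℝ) (hx : 0 ≤ x) : Psi x ≤ 1 / 2 := by
  rw [psi_eq_half_sub]
  have : 0 ≤ ∫ t in (0:ℝ)..x, npdf t :=
    intervalIntegral.integral_nonneg hx fun t _ => (npdf_pos t).le
  linarith

lemma hasDerivAt_cdf (x : ℝ) : HasDerivAt stdNormalCDF (npdf x) x := by
  have hrepr : stdNormalCDF = fun y => stdNormalCDF 0 + ∫ t in (0:ℝ)..y, npdf t := by
    funext y
    have := cdf_sub 0 y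
    linarith
  rw [hrepr]
  exact (intervalIntegral.integral_hasDerivAt_right
    integrable_npdf.intervalIntegrable
    (continuous_npdf.stronglyMeasurableAtFilter _ _)
    continuous_npdf.continuousAt).const_add _

lemma hasDerivAt_psi (x : ℝ) : HasDerivAt Psi (-npdf x) x := by
  unfold Psi
  simpa using (hasDerivAt_cdf x).const_sub 1

lemma hasDerivAt_npdf (t : ℝ) : HasDerivAt npdf (-t * npdf t) t := by
  unfold npdf
  have h1 : HasDerivAt (fun s : ℝ => -s ^ 2 / 2) (-t) t := by
    have := (hasDerivAt_pow 2 t).neg.div_const 2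
    simpa using this.congr_deriv (by push_cast; ring)
  have h2 := (h1.exp).const_mul (Real.sqrt (2 * Real.pi))⁻¹
  refine h2.congr_deriv ?_
  ring

lemma npdf_antitone {s t : ℝ} (hs : 0 ≤ s) (hst : s ≤ t) : npdf t ≤ npdf s := by
  unfold npdf
  have : Real.exp (-t ^ 2 / 2) ≤ Real.exp (-s ^ 2 / 2) := by
    apply Real.exp_le_exp.mpr; nlinarith
  have h0 : 0 ≤ (Real.sqrt (2 * Real.pi))⁻¹ := by positivity
  exact mul_le_mul_of_nonneg_left this h0

lemma tendsto_npdf_atTop : Tendsto npdf atTop (nhds 0) := by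
  unfold npdf
  rw [show (0:ℝ) = (Real.sqrt (2 * Real.pi))⁻¹ * 0 by ring]
  apply Tendsto.const_mul
  apply Real.tendsto_exp_atBot.comp
  have : Tendsto (fun t : ℝ => t ^ 2 / 2) atTop atTop :=
    (tendsto_pow_atTop (by norm_num)).atTop_div_const (by norm_num)
  have h2 := tendsto_neg_atTop_atBot.comp this
  refine h2.congr fun t => ?_
  simp [neg_div]

lemma tail_integral (x : ℝ) (hx : 0 < x) : ∫ t in Ioi x, t * npdf t = npdf x := by
  have hderiv : ∀ t ∈ Ioi x, HasDerivAt (fun s => -npdf s) (t * npdf t) t := by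
    intro t _
    exact (hasDerivAt_npdf t).neg.congr_deriv (by ring)
  have hpos : ∀ t ∈ Ioi x, 0 ≤ t * npdf t := fun t ht =>
    mul_nonneg (le_of_lt (lt_trans hx ht)) (npdf_pos t).le
  have hlim : Tendsto (fun s => -npdf s) atTop (nhds 0) := by
    simpa using tendsto_npdf_atTop.neg
  have := integral_Ioi_of_hasDerivAt_of_nonneg
    ((continuous_npdf.neg).continuousWithinAt) hderiv hpos hlim
  simpa using this

lemma integrableOn_tail (x : ℝ) (hx : 0 < x) : IntegrableOn (fun t => t * npdf t) (Ioi x) := by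
  have hderiv : ∀ t ∈ Ioi x, HasDerivAt (fun s => -npdf s) (t * npdf t) t := by
    intro t _
    exact (hasDerivAt_npdf t).neg.congr_deriv (by ring)
  have hpos : ∀ t ∈ Ioi x, 0 ≤ t * npdf t := fun t ht =>
    mul_nonneg (le_of_lt (lt_trans hx ht)) (npdf_pos t).le
  have hlim : Tendsto (fun s => -npdf s) atTop (nhds 0) := by
    simpa using tendsto_npdf_atTop.neg
  exact integrableOn_Ioi_deriv_of_nonneg ((continuous_npdf.neg).continuousWithinAt) hderiv hpos hlim

lemma mills (x : ℝ) (hx : 0 < x) : Psi x ≤ npdf x / x := by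
  rw [psi_eq_integral]
  have hmono : ∫ t in Ioi x, npdf t ≤ ∫ t in Ioi x, x⁻¹ * (t * npdf t) := by
    apply setIntegral_mono_on integrable_npdf.integrableOn
      ((integrableOn_tail x hx).const_mul _) measurableSet_Ioi
    intro t ht
    rw [mem_Ioi] at ht
    have h1 : 1 ≤ x⁻¹ * t := by
      rw [← div_eq_inv_mul, le_div_iff₀ hx]; linarith
    nlinarith [npdf_pos t, npdf_pos t]
  rw [integral_const_mul, tail_integral x hx] at hmono
  rw [div_eq_inv_mul]
  exact hmono


lemma exp_lb {u : ℝ} (h0 : 0 ≤ u) (h1 : u ≤ 1) :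
    1 - u + u^2/2 - u^3/6 + u^4/24 - u^5/120 - 7*u^6/4320 ≤ Real.exp (-u) := by
  have hb := Real.exp_bound (x := -u) (by rwa [abs_neg, abs_of_nonneg h0]) (n := 6) (by norm_num)
  rw [abs_neg, abs_of_nonneg h0] at hb
  have hs : ∑ m ∈ Finset.range 6, (-u) ^ m / (m.factorial : ℝ)
      = 1 - u + u^2/2 - u^3/6 + u^4/24 - u^5/120 := by
    simp [Finset.sum_range_succ, Nat.factorial]
    ring
  rw [hs, abs_le] at hb
  have hb1 := hb.1
  norm_num [Nat.factorial] at hb1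
  linarith

lemma clo_le : (0.3989422 : ℝ) ≤ (Real.sqrt (2 * Real.pi))⁻¹ := by
  have hs : Real.sqrt (2 * Real.pi) ≤ (0.3989422 : ℝ)⁻¹ := by
    rw [show ((0.3989422 : ℝ)⁻¹) = Real.sqrt (((0.3989422 : ℝ)⁻¹) ^ 2) from
      (Real.sqrt_sq (by norm_num)).symm]
    apply Real.sqrt_le_sqrt
    nlinarith [Real.pi_lt_d6]
  calc (0.3989422 : ℝ) = ((0.3989422 : ℝ)⁻¹)⁻¹ := by norm_num
    _ ≤ (Real.sqrt (2 * Real.pi))⁻¹ := by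
        apply inv_anti₀ sqrt2pi_pos hs

lemma poly_integral (a : ℝ) :
    ∫ t in (0:ℝ)..a, (1 - t^2/2 + t^4/8 - t^6/48 + t^8/384 - t^10/3840 - 7*t^12/276480)
      = a - a^3/6 + a^5/40 - a^7/336 + a^9/3456 - a^11/42240 - 7*a^13/3594240 := by
  have key : ∀ u : ℝ, HasDerivAt
      (fun t => t - t^3/6 + t^5/40 - t^7/336 + t^9/3456 - t^11/42240 - 7*t^13/3594240)
      (1 - u^2/2 + u^4/8 - u^6/48 + u^8/384 - u^10/3840 - 7*u^12/276480) u := by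
    intro u
    have h := ((((((hasDerivAt_id u).sub ((hasDerivAt_pow 3 u).div_const 6)).add
      ((hasDerivAt_pow 5 u).div_const 40)).sub ((hasDerivAt_pow 7 u).div_const 336)).add
      ((hasDerivAt_pow 9 u).div_const 3456)).sub ((hasDerivAt_pow 11 u).div_const 42240)).sub
      (((hasDerivAt_pow 13 u).const_mul (7:ℝ)).div_const 3594240)
    refine h.congr_deriv ?_
    push_cast
    ring
  rw [intervalIntegral.integral_eq_sub_of_hasDerivAt (fun u _ => key u)
    ((Continuous.intervalIntegrable (by continuity) _ _))]
  norm_num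

lemma psi_upper {a : ℝ} (h0 : 0 ≤ a) (h1 : a ≤ 1) :
    Psi a ≤ 1/2 - 0.3989422 *
      (a - a^3/6 + a^5/40 - a^7/336 + a^9/3456 - a^11/42240 - 7*a^13/3594240) := by
  rw [psi_eq_half_sub]
  have hmono : ∫ t in (0:ℝ)..a,
      (0.3989422:ℝ) * (1 - t^2/2 + t^4/8 - t^6/48 + t^8/384 - t^10/3840 - 7*t^12/276480)
      ≤ ∫ t in (0:ℝ)..a, npdf t := by
    apply intervalIntegral.integral_mono_on h0
      (Continuous.intervalIntegrable (by continuity) _ _)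
      integrable_npdf.intervalIntegrable
    intro t ht
    obtain ⟨ht0, hta⟩ := ht
    have hu : (0:ℝ) ≤ t^2/2 := by positivity
    have hu1 : t^2/2 ≤ 1 := by nlinarith [hta.trans h1]
    have he : 1 - t^2/2 + t^4/8 - t^6/48 + t^8/384 - t^10/3840 - 7*t^12/276480
        ≤ Real.exp (-t^2/2) := by
      calc 1 - t^2/2 + t^4/8 - t^6/48 + t^8/384 - t^10/3840 - 7*t^12/276480
          = 1 - t^2/2 + (t^2/2)^2/2 - (t^2/2)^3/6 + (t^2/2)^4/24 - (t^2/2)^5/120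
            - 7*(t^2/2)^6/4320 := by ring
        _ ≤ Real.exp (-(t^2/2)) := exp_lb hu hu1
        _ = Real.exp (-t^2/2) := by ring_nf
    have hexp : (0:ℝ) ≤ Real.exp (-t^2/2) := (Real.exp_pos _).le
    have hc := clo_le
    unfold npdf
    calc (0.3989422:ℝ) * (1 - t^2/2 + t^4/8 - t^6/48 + t^8/384 - t^10/3840 - 7*t^12/276480)
        ≤ (0.3989422:ℝ) * Real.exp (-t^2/2) :=
          mul_le_mul_of_nonneg_left he (by norm_num)
      _ ≤ (Real.sqrt (2 * Real.pi))⁻¹ * Real.exp (-t^2/2) :=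
          mul_le_mul_of_nonneg_right hc hexp
  rw [intervalIntegral.integral_const_mul, poly_integral] at hmono
  linarith

lemma psiU3 : Psi 0.3 ≤ 0.38208861 :=
  (psi_upper (by norm_num) (by norm_num)).trans (by norm_num)

lemma psiU6 : Psi 0.6 ≤ 0.27425317 :=
  (psi_upper (by norm_num) (by norm_num)).trans (by norm_num)

lemma psiU7 : Psi 0.7 ≤ 0.24196372 :=
  (psi_upper (by norm_num) (by norm_num)).trans (by norm_num)

lemma psiU72 : Psi 0.72 ≤ 0.23576258 :=
  (psi_upper (by norm_num) (by norm_num)).trans (by norm_num)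

lemma psiU736 : Psi 0.736 ≤ 0.23086543 :=
  (psi_upper (by norm_num) (by norm_num)).trans (by norm_num)

lemma psiUb : Psi 0.752 ≤ 0.22602562 :=
  (psi_upper (by norm_num) (by norm_num)).trans (by norm_num)

lemma npdf_b_lower : (0.22602562 : ℝ) ≤ 0.752 * npdf 0.752 := by
  have hu : (0:ℝ) ≤ (0.752:ℝ)^2/2 := by norm_num
  have hu1 : ((0.752:ℝ)^2/2 : ℝ) ≤ 1 := by norm_num
  have he := exp_lb hu hu1
  have he2 : (0.7536:ℝ) ≤ Real.exp (-(0.752:ℝ)^2/2) := by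
    rw [show (-(0.752:ℝ)^2/2) = -((0.752:ℝ)^2/2) by ring]
    refine le_trans (by norm_num) he
  have hc := clo_le
  have hexp : (0:ℝ) ≤ Real.exp (-(0.752:ℝ)^2/2) := (Real.exp_pos _).le
  unfold npdf
  nlinarith [sqrt2pi_pos]

lemma continuous_psi : Continuous Psi :=
  continuous_iff_continuousAt.mpr fun x => (hasDerivAt_psi x).continuousAt

lemma psi_convexOn : ConvexOn ℝ (Ici (0:ℝ)) Psi := by
  have hmono : MonotoneOn (deriv Psi) (interior (Ici (0:ℝ))) := by
    intro s hs t ht hst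
    rw [interior_Ici, mem_Ioi] at hs ht
    rw [(hasDerivAt_psi s).deriv, (hasDerivAt_psi t).deriv]
    have := npdf_antitone hs.le hst
    linarith
  exact hmono.convexOn_of_deriv (convex_Ici 0) continuous_psi.continuousOn
    (fun t _ => (hasDerivAt_psi t).differentiableAt.differentiableWithinAt)

lemma psi_chord {a b x : ℝ} (h0 : 0 ≤ a) (hab : a < b) (hx : x ∈ Icc a b) :
    (b - a) * Psi x ≤ (b - x) * Psi a + (x - a) * Psi b := by
  obtain ⟨h1, h2⟩ := hx
  have hba : (0:ℝ) < b - a := by linarith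
  have hu : (0:ℝ) ≤ (b - x)/(b - a) := by
    apply div_nonneg (by linarith) hba.le
  have hv : (0:ℝ) ≤ (x - a)/(b - a) := by
    apply div_nonneg (by linarith) hba.le
  have huv : (b - x)/(b - a) + (x - a)/(b - a) = 1 := by field_simp; ring
  have hcomb : ((b - x)/(b - a)) • a + ((x - a)/(b - a)) • b = x := by
    simp only [smul_eq_mul]
    field_simp
    ring
  have hkey := psi_convexOn.2 (mem_Ici.mpr h0) (mem_Ici.mpr (by linarith : (0:ℝ) ≤ b))
    hu hv huv
  rw [hcomb] at hkey
  simp only [smul_eq_mul] at hkey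
  have := mul_le_mul_of_nonneg_left hkey hba.le
  calc (b - a) * Psi x ≤ (b - a) * (((b - x)/(b - a)) * Psi a + ((x - a)/(b - a)) * Psi b) :=
      this
    _ = (b - x) * Psi a + (x - a) * Psi b := by field_simp

lemma hasDerivAt_xpsi (t : ℝ) :
    HasDerivAt (fun s => s * Psi s) (Psi t - t * npdf t) t := by
  have h := (hasDerivAt_id t).mul (hasDerivAt_psi t)
  refine h.congr_deriv ?_
  simp only [id_eq, one_mul]
  ring

lemma Dfun_mono : MonotoneOn (fun t => t * npdf t - Psi t) (Icc (0.752:ℝ) 1.2) := by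
  apply monotoneOn_of_deriv_nonneg (convex_Icc _ _)
  · exact ((continuous_id.mul continuous_npdf).sub continuous_psi).continuousOn
  · intro t _
    have hd : HasDerivAt (fun t => t * npdf t - Psi t) ((2 - t^2) * npdf t) t := by
      have h1 := ((hasDerivAt_id t).mul (hasDerivAt_npdf t)).sub (hasDerivAt_psi t)
      refine h1.congr_deriv ?_
      simp only [id_eq, one_mul]
      ring
    exact hd.differentiableAt.differentiableWithinAt
  · intro t ht
    rw [interior_Icc, mem_Ioo] at ht
    have hd : HasDerivAt (fun t => t * npdf t - Psi t) ((2 - t^2) * npdf t) t := by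
      have h1 := ((hasDerivAt_id t).mul (hasDerivAt_npdf t)).sub (hasDerivAt_psi t)
      refine h1.congr_deriv ?_
      simp only [id_eq, one_mul]
      ring
    rw [hd.deriv]
    have hp := npdf_pos t
    apply mul_nonneg (by nlinarith [ht.1, ht.2]) hp.le

lemma xpsi_deriv_nonpos {t : ℝ} (ht : (0.752:ℝ) < t) : Psi t ≤ t * npdf t := by
  rcases le_or_gt t 1.2 with h | h
  · have hm := Dfun_mono (Set.left_mem_Icc.mpr (by norm_num)) ⟨ht.le, h⟩ ht.le
    simp only at hm
    have h1 := psiUb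
    have h2 := npdf_b_lower
    linarith
  · have hm := mills t (by linarith)
    have hn := npdf_pos t
    have : npdf t / t ≤ t * npdf t := by
      rw [div_le_iff₀ (by linarith : (0:ℝ) < t)]
      nlinarith [mul_pos hn (show (0:ℝ) < t^2 - 1 by nlinarith)]
    linarith

lemma xpsi_antitone : AntitoneOn (fun t => t * Psi t) (Ici (0.752:ℝ)) := by
  apply antitoneOn_of_deriv_nonpos (convex_Ici _)
  · exact (continuous_id.mul continuous_psi).continuousOn
  · intro t _
    exact (hasDerivAt_xpsi t).differentiableAt.differentiableWithinAt
  · intro t ht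
    rw [interior_Ici, mem_Ioi] at ht
    rw [(hasDerivAt_xpsi t).deriv]
    have := xpsi_deriv_nonpos ht
    linarith

lemma xpsi_le (x : ℝ) (hx : 0 < x) : x * Psi x ≤ 0.17 := by
  rcases le_or_gt x 0.3 with h3 | h3
  · have h1 := psi_le_half x hx.le
    have h2 := psi_nonneg x
    nlinarith
  rcases lt_or_ge x 0.752 with h752 | h752
  swap
  · have hm := xpsi_antitone (Set.self_mem_Ici) (mem_Ici.mpr h752) h752
    simp only at hm
    have := psiUb
    calc x * Psi x ≤ 0.752 * Psi 0.752 := hm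
      _ ≤ 0.752 * 0.22602562 := by nlinarith
      _ ≤ 0.17 := by norm_num
  rcases le_or_gt x 0.6 with h6 | h6
  · have hc := psi_chord (a := 0.3) (b := 0.6) (by norm_num) (by norm_num) ⟨h3.le, h6⟩
    have hub : (0.6 - 0.3) * Psi x ≤ (0.6 - x) * 0.38208861 + (x - 0.3) * 0.27425317 := by
      refine hc.trans ?_
      gcongr <;> [exact psiU3; exact psiU6]
    nlinarith [hub, mul_le_mul_of_nonneg_left hub hx.le, sq_nonneg (x - 0.6815), psi_nonneg x]
  rcases le_or_gt x 0.7 with h7 | h7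
  · have hc := psi_chord (a := 0.6) (b := 0.7) (by norm_num) (by norm_num) ⟨h6.le, h7⟩
    have hub : (0.7 - 0.6) * Psi x ≤ (0.7 - x) * 0.27425317 + (x - 0.6) * 0.24196372 := by
      refine hc.trans ?_
      gcongr <;> [exact psiU6; exact psiU7]
    nlinarith [hub, mul_le_mul_of_nonneg_left hub hx.le, sq_nonneg (x - 0.7247), psi_nonneg x]
  rcases le_or_gt x 0.72 with h72 | h72
  · have hc := psi_chord (a := 0.7) (b := 0.72) (by norm_num) (by norm_num) ⟨h7.le, h72⟩
    have hub : (0.72 - 0.7) * Psi x ≤ (0.72 - x) * 0.24196372 + (x - 0.7) * 0.23576258 := by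
      refine hc.trans ?_
      gcongr <;> [exact psiU7; exact psiU72]
    nlinarith [hub, mul_le_mul_of_nonneg_left hub hx.le, sq_nonneg (x - 0.7402), psi_nonneg x]
  rcases le_or_gt x 0.736 with h736 | h736
  · have hc := psi_chord (a := 0.72) (b := 0.736) (by norm_num) (by norm_num) ⟨h72.le, h736⟩
    have hub : (0.736 - 0.72) * Psi x ≤ (0.736 - x) * 0.23576258 + (x - 0.72) * 0.23086543 := by
      refine hc.trans ?_
      gcongr <;> [exact psiU72; exact psiU736]
    nlinarith [hub, mul_le_mul_of_nonneg_left hub hx.le, sq_nonneg (x - 0.7452), psi_nonneg x]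
  · have hc := psi_chord (a := 0.736) (b := 0.752) (by norm_num) (by norm_num) ⟨h736.le, h752.le⟩
    have hub : (0.752 - 0.736) * Psi x ≤ (0.752 - x) * 0.23086543 + (x - 0.736) * 0.22602562 := by
      refine hc.trans ?_
      gcongr <;> [exact psiU736; exact psiUb]
    nlinarith [hub, mul_le_mul_of_nonneg_left hub hx.le, sq_nonneg (x - 0.7496), psi_nonneg x]

theorem lemma2_tail_bound (x x₁ x₂ : ℝ) (hx : 0 < x) (hx₁ : 0 < x₁) (hx₂ : 0 < x₂)
    (h : x ≥ max x₁ x₂) : x₁ * Psi x ≤ PsiStar x₂ := by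
  obtain ⟨h1, h2⟩ := max_le_iff.mp h
  have step1 : x₁ * Psi x ≤ x * Psi x := mul_le_mul_of_nonneg_right h1 (psi_nonneg x)
  unfold PsiStar
  split_ifs with hc
  · exact step1.trans (xpsi_le x hx)
  · push_neg at hc
    have hm := xpsi_antitone (mem_Ici.mpr hc) (mem_Ici.mpr (hc.trans h2)) h2
    simp only at hm
    exact step1.trans hm
end

section
/- The function Ψ := 1 - Φ, where Φ is the standard normal distribution function, is log-concave on ℝ; equivalently, the function x ↦ ln(1 - Φ(x)) is concave. -/
open MeasureTheory Real Set Filter Topology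

namespace NTLC

noncomputable def gauss (t : ℝ) : ℝ := (Real.sqrt (2 * Real.pi))⁻¹ * Real.exp (-t ^ 2 / 2)

lemma sqrt2pi_pos : 0 < Real.sqrt (2 * Real.pi) := Real.sqrt_pos.2 (by positivity)

lemma gauss_pos (t : ℝ) : 0 < gauss t :=
  mul_pos (inv_pos.2 sqrt2pi_pos) (Real.exp_pos _)

lemma gauss_eq : gauss = fun t => (Real.sqrt (2 * Real.pi))⁻¹ * Real.exp (-(1/2) * t ^ 2) := by
  funext t; unfold gauss; ring_nf

lemma continuous_gauss : Continuous gauss := by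
  unfold gauss; fun_prop

lemma integrable_gauss : Integrable gauss := by
  rw [gauss_eq]
  exact (integrable_exp_neg_mul_sq (by norm_num : (0:ℝ) < 1/2)).const_mul _

lemma integral_gauss : ∫ t, gauss t = 1 := by
  rw [gauss_eq, integral_const_mul, integral_gaussian]
  rw [show Real.pi / (1/2) = 2 * Real.pi by ring]
  exact inv_mul_cancel₀ sqrt2pi_pos.ne'

noncomputable def Psi (x : ℝ) : ℝ := ∫ t in Set.Ioi x, gauss t

lemma psi_eq (x : ℝ) : 1 - stdNormalCDF x = Psi x := by
  have h := integral_add_compl (measurableSet_Iic (a := x)) integrable_gauss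
  rw [compl_Iic, integral_gauss] at h
  have : stdNormalCDF x = ∫ t in Set.Iic x, gauss t := rfl
  rw [this, Psi]; linarith

lemma psi_pos (x : ℝ) : 0 < Psi x := by
  rw [Psi, setIntegral_pos_iff_support_of_nonneg_ae
    (Eventually.of_forall fun t => (gauss_pos t).le) integrable_gauss.integrableOn]
  have : Function.support gauss = Set.univ := by
    ext t; simp [(gauss_pos t).ne']
  rw [this, Set.univ_inter]
  simp [Real.volume_Ioi]

lemma hasDerivAt_cdf (x : ℝ) : HasDerivAt stdNormalCDF (gauss x) x := by
  have key : stdNormalCDF = fun y => stdNormalCDF 0 + ∫ t in (0:ℝ)..y, gauss t := by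
    funext y
    have h := intervalIntegral.integral_Iic_sub_Iic
      (integrable_gauss.integrableOn (s := Set.Iic 0))
      (integrable_gauss.integrableOn (s := Set.Iic y))
    have h0 : stdNormalCDF y = ∫ t in Set.Iic y, gauss t := rfl
    have h1 : stdNormalCDF 0 = ∫ t in Set.Iic 0, gauss t := rfl
    rw [h0, h1]; linarith
  rw [key]
  exact (intervalIntegral.integral_hasDerivAt_right
    integrable_gauss.intervalIntegrable
    continuous_gauss.aestronglyMeasurable.stronglyMeasurableAtFilter
    continuous_gauss.continuousAt).const_add _

lemma hasDerivAt_Psi (x : ℝ) : HasDerivAt Psi (-(gauss x)) x := by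
  have : Psi = fun y => 1 - stdNormalCDF y := funext fun y => (psi_eq y).symm
  rw [this]
  simpa using (hasDerivAt_cdf x).const_sub 1

lemma hasDerivAt_gauss (t : ℝ) : HasDerivAt gauss (-t * gauss t) t := by
  have h1 : HasDerivAt (fun t : ℝ => -t ^ 2 / 2) (-t) t := by
    have := ((hasDerivAt_pow 2 t).neg).div_const 2
    simpa using this.congr_deriv (by ring)
  have h2 := (h1.exp).const_mul (Real.sqrt (2 * Real.pi))⁻¹
  have : gauss = fun t => (Real.sqrt (2 * Real.pi))⁻¹ * Real.exp (-t ^ 2 / 2) := rfl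
  rw [this]
  refine h2.congr_deriv ?_
  beta_reduce; ring

lemma integrable_mul_gauss : Integrable (fun t => t * gauss t) := by
  have h : (fun t : ℝ => t * gauss t)
      = fun t => (Real.sqrt (2 * Real.pi))⁻¹ * (t * Real.exp (-(1/2) * t ^ 2)) := by
    funext t; rw [gauss_eq]; ring
  rw [h]
  exact (integrable_mul_exp_neg_mul_sq (by norm_num : (0:ℝ) < 1/2)).const_mul _

lemma tendsto_gauss : Tendsto gauss atTop (nhds 0) := by
  rw [gauss_eq]
  have h1 : Tendsto (fun t : ℝ => -(1/2) * t ^ 2) atTop atBot :=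
    tendsto_neg_const_mul_pow_atTop two_ne_zero (by norm_num)
  have h2 := Real.tendsto_exp_atBot.comp h1
  have h3 := h2.const_mul (Real.sqrt (2 * Real.pi))⁻¹
  simpa using h3

lemma tail_eq (x : ℝ) : ∫ t in Set.Ioi x, t * gauss t = gauss x := by
  have h := integral_Ioi_of_hasDerivAt_of_tendsto'
    (f := fun t => -(gauss t)) (f' := fun t => t * gauss t) (a := x) (m := 0)
    (fun t _ => (hasDerivAt_gauss t).neg.congr_deriv (by ring))
    integrable_mul_gauss.integrableOn
    (by simpa using tendsto_gauss.neg)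
  rw [h]; ring

lemma mills (x : ℝ) : x * Psi x ≤ gauss x := by
  rcases le_or_gt x 0 with hx | hx
  · exact le_trans (mul_nonpos_of_nonpos_of_nonneg hx (psi_pos x).le) (gauss_pos x).le
  · have h1 : x * Psi x = ∫ t in Set.Ioi x, x * gauss t := by
      rw [Psi, integral_const_mul]
    rw [h1, ← tail_eq x]
    apply setIntegral_mono_on (integrable_gauss.const_mul x).integrableOn
      integrable_mul_gauss.integrableOn measurableSet_Ioi
    intro t ht
    exact mul_le_mul_of_nonneg_right (le_of_lt ht) (gauss_pos t).le

theorem main : ConcaveOn ℝ Set.univ (fun x : ℝ => Real.log (1 - stdNormalCDF x)) := by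
  have hfun : (fun x : ℝ => Real.log (1 - stdNormalCDF x)) = fun x => Real.log (Psi x) :=
    funext fun x => by rw [psi_eq]
  rw [hfun]
  have hD1 : ∀ x : ℝ, HasDerivAt (fun y => Real.log (Psi y)) (-(gauss x) / Psi x) x :=
    fun x => (hasDerivAt_Psi x).log (psi_pos x).ne'
  have hderiv_eq : deriv (fun y => Real.log (Psi y)) = fun x => -(gauss x) / Psi x :=
    funext fun x => (hD1 x).deriv
  have hD2 : ∀ x : ℝ, HasDerivAt (fun y => -(gauss y) / Psi y)
      ((x * gauss x * Psi x - gauss x ^ 2) / Psi x ^ 2) x := by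
    intro x
    have := ((hasDerivAt_gauss x).neg).div (hasDerivAt_Psi x) (psi_pos x).ne'
    refine this.congr_deriv ?_
    simp only [Pi.neg_apply]; ring
  apply concaveOn_univ_of_deriv2_nonpos
  · exact fun x => (hD1 x).differentiableAt
  · rw [hderiv_eq]; exact fun x => (hD2 x).differentiableAt
  · intro x
    have : deriv^[2] (fun y => Real.log (Psi y)) x
        = (x * gauss x * Psi x - gauss x ^ 2) / Psi x ^ 2 := by
      rw [Function.iterate_succ, Function.iterate_one, Function.comp_apply, hderiv_eq]
      exact (hD2 x).deriv
    rw [this]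
    apply div_nonpos_of_nonpos_of_nonneg _ (sq_nonneg _)
    nlinarith [mills x, gauss_pos x, psi_pos x]

end NTLC

theorem normal_tail_log_concave :
    ConcaveOn ℝ Set.univ (fun x : ℝ => Real.log (1 - stdNormalCDF x)) := NTLC.main
end

section
/- For all integers n > 1 and all real z, |Φ(z) - Φ_n(z)| < C/(n-1), where Φ_n(z) := Φ(z/√(1 + (z²-1)/n)), C := (k - 1/2)·e^{-k}·√(k/π), and k := 1 + √3/2. -/
open MeasureTheory Set

/- ### Auxiliary constants and scalar inequalities -/

noncomputable def wc : ℝ := 2 + Real.sqrt 3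

lemma sqrt3_lb : (1.7:ℝ) ≤ Real.sqrt 3 := by
  nlinarith [Real.sq_sqrt (show (0:ℝ) ≤ 3 by norm_num), Real.sqrt_nonneg 3]

lemma sqrt3_ub : Real.sqrt 3 ≤ 2 := by
  nlinarith [Real.sq_sqrt (show (0:ℝ) ≤ 3 by norm_num), Real.sqrt_nonneg 3]

lemma sqrt3_sq : Real.sqrt 3 ^ 2 = 3 := Real.sq_sqrt (by norm_num)

lemma wc_nonneg : (0:ℝ) ≤ wc := by unfold wc; linarith [sqrt3_lb]

lemma exp4_lt : Real.exp 4 < 55 := by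
  have hp : (0:ℝ) < Real.exp 1 := Real.exp_pos 1
  have h1 : Real.exp 1 < 2.7182818286 := Real.exp_one_lt_d9
  have h4 : Real.exp 4 = (Real.exp 1) ^ 4 := by
    rw [← Real.exp_nat_mul]; norm_num
  have h2 : Real.exp 1 ^ 2 < 7.39 := by nlinarith
  have h3 : Real.exp 1 ^ 4 = (Real.exp 1 ^ 2) ^ 2 := by ring
  rw [h4, h3]
  nlinarith [pow_pos hp 2]

noncomputable def gfun (x : ℝ) : ℝ := x * (x - 1) ^ 2 * Real.exp (-x)

lemma gfun_hasDeriv (x : ℝ) :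
    HasDerivAt gfun (-((x - 1) * (x ^ 2 - 4 * x + 1)) * Real.exp (-x)) x := by
  have h1 : HasDerivAt (fun x : ℝ => x * (x - 1) ^ 2) ((x - 1) ^ 2 + x * (2 * (x - 1))) x := by
    have ha : HasDerivAt (fun x : ℝ => x) 1 x := hasDerivAt_id x
    have hb : HasDerivAt (fun x : ℝ => (x - 1) ^ 2) (2 * (x - 1)) x := by
      have := ((hasDerivAt_id x).sub_const 1).pow 2
      exact this.congr_deriv (by norm_num)
    exact (ha.mul hb).congr_deriv (by ring)
  have h2 : HasDerivAt (fun x : ℝ => Real.exp (-x)) (-Real.exp (-x)) x := by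
    exact ((Real.hasDerivAt_exp (-x)).comp x ((hasDerivAt_id x).neg)).congr_deriv (by simp)
  have := h1.mul h2
  refine this.congr_deriv ?_
  ring

lemma gfun_cont : Continuous gfun := by
  unfold gfun; fun_prop

lemma gfun_mono : MonotoneOn gfun (Icc 1 wc) := by
  apply monotoneOn_of_deriv_nonneg (convex_Icc 1 wc) gfun_cont.continuousOn
  · exact fun x _ => (gfun_hasDeriv x).differentiableAt.differentiableWithinAt
  · intro x hx
    rw [interior_Icc, mem_Ioo] at hx
    rw [(gfun_hasDeriv x).deriv]
    have hq : x ^ 2 - 4 * x + 1 ≤ 0 := by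
      have hA : 0 ≤ Real.sqrt 3 - (x - 2) := by
        have := hx.2; unfold wc at this; linarith
      have hB : 0 ≤ Real.sqrt 3 + (x - 2) := by linarith [sqrt3_lb, hx.1]
      nlinarith [mul_nonneg hA hB, sqrt3_sq]
    have he := Real.exp_pos (-x)
    have h5 : 0 ≤ -((x - 1) * (x ^ 2 - 4 * x + 1)) := by
      nlinarith [mul_nonneg (show (0:ℝ) ≤ x - 1 by linarith [hx.1]) (neg_nonneg.mpr hq)]
    exact mul_nonneg h5 he.le

lemma gfun_anti : AntitoneOn gfun (Ici wc) := by
  apply antitoneOn_of_deriv_nonpos (convex_Ici wc) gfun_cont.continuousOn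
  · exact fun x _ => (gfun_hasDeriv x).differentiableAt.differentiableWithinAt
  · intro x hx
    rw [interior_Ici, mem_Ioi] at hx
    rw [(gfun_hasDeriv x).deriv]
    have hwx : 2 + Real.sqrt 3 < x := hx
    have hq : 0 ≤ x ^ 2 - 4 * x + 1 := by
      have hA : 0 ≤ x - 2 - Real.sqrt 3 := by linarith
      nlinarith [sqrt3_sq, sqrt3_lb]
    have he := Real.exp_pos (-x)
    have hx1 : (1:ℝ) ≤ x := by linarith [sqrt3_lb]
    have h5 : -((x - 1) * (x ^ 2 - 4 * x + 1)) ≤ 0 := by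
      nlinarith [mul_nonneg (show (0:ℝ) ≤ x - 1 by linarith) hq]
    exact mul_nonpos_of_nonpos_of_nonneg h5 he.le

lemma gfun_le (x : ℝ) (hx : 0 ≤ x) : gfun x ≤ gfun wc := by
  have hwc1 : (3.7:ℝ) ≤ wc := by unfold wc; linarith [sqrt3_lb]
  have hwc2 : wc ≤ 4 := by unfold wc; linarith [sqrt3_ub]
  rcases le_or_gt x 1 with h1 | h1
  · have hb1 : gfun x ≤ 4 / 27 := by
      unfold gfun
      have he : Real.exp (-x) ≤ 1 := Real.exp_le_one_iff.mpr (by linarith)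
      have hp : x * (x - 1) ^ 2 ≤ 4 / 27 := by
        nlinarith [mul_nonneg (sq_nonneg (x - 1/3)) (show (0:ℝ) ≤ 4/3 - x by linarith)]
      have hpn : 0 ≤ x * (x - 1) ^ 2 := mul_nonneg hx (sq_nonneg _)
      nlinarith
    have hb2 : (4:ℝ) / 27 ≤ gfun wc := by
      unfold gfun
      have he : (55:ℝ)⁻¹ ≤ Real.exp (-wc) := by
        calc (55:ℝ)⁻¹ ≤ (Real.exp 4)⁻¹ := inv_anti₀ (Real.exp_pos 4) exp4_lt.le
        _ = Real.exp (-4) := by rw [Real.exp_neg]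
        _ ≤ Real.exp (-wc) := Real.exp_le_exp.mpr (by linarith)
      have hq : (26:ℝ) ≤ wc * (wc - 1) ^ 2 := by nlinarith
      calc (4:ℝ)/27 ≤ 26 * (55:ℝ)⁻¹ := by norm_num
        _ ≤ (wc * (wc - 1) ^ 2) * Real.exp (-wc) :=
            mul_le_mul hq he (by norm_num) (by linarith)
    linarith
  · rcases le_or_gt x wc with h2 | h2
    · exact gfun_mono (mem_Icc.mpr ⟨h1.le, h2⟩) (mem_Icc.mpr ⟨by linarith, le_rfl⟩) h2
    · exact gfun_anti (mem_Ici.mpr le_rfl) (mem_Ici.mpr h2.le) h2.le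

lemma key_ineq (u : ℝ) : |u| * |u ^ 2 - 1| * Real.exp (-u ^ 2 / 2)
    ≤ Real.sqrt wc * (wc - 1) * Real.exp (-wc / 2) := by
  have ha : 0 ≤ |u| * |u ^ 2 - 1| * Real.exp (-u ^ 2 / 2) := by positivity
  have hb : 0 ≤ Real.sqrt wc * (wc - 1) * Real.exp (-wc / 2) := by
    have h1 : (1:ℝ) ≤ wc := by unfold wc; linarith [sqrt3_lb]
    exact mul_nonneg (mul_nonneg (Real.sqrt_nonneg wc) (by linarith)) (Real.exp_pos _).le
  have hsq : (|u| * |u ^ 2 - 1| * Real.exp (-u ^ 2 / 2)) ^ 2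
      ≤ (Real.sqrt wc * (wc - 1) * Real.exp (-wc / 2)) ^ 2 := by
    have h1 : (|u| * |u ^ 2 - 1| * Real.exp (-u ^ 2 / 2)) ^ 2 = gfun (u ^ 2) := by
      unfold gfun
      rw [mul_pow, mul_pow, sq_abs, sq_abs, pow_two (Real.exp _), ← Real.exp_add]
      ring_nf
    have h2 : (Real.sqrt wc * (wc - 1) * Real.exp (-wc / 2)) ^ 2 = gfun wc := by
      unfold gfun
      rw [mul_pow, mul_pow, Real.sq_sqrt wc_nonneg, pow_two (Real.exp _), ← Real.exp_add]
      ring_nf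
    rw [h1, h2]
    exact gfun_le _ (sq_nonneg u)
  calc |u| * |u ^ 2 - 1| * Real.exp (-u ^ 2 / 2)
      = Real.sqrt ((|u| * |u ^ 2 - 1| * Real.exp (-u ^ 2 / 2)) ^ 2) := (Real.sqrt_sq ha).symm
    _ ≤ Real.sqrt ((Real.sqrt wc * (wc - 1) * Real.exp (-wc / 2)) ^ 2) := Real.sqrt_le_sqrt hsq
    _ = _ := Real.sqrt_sq hb

/- ### The standard normal CDF and its derivative -/

lemma gauss_integrable :
    Integrable (fun t : ℝ => (Real.sqrt (2 * Real.pi))⁻¹ * Real.exp (-t ^ 2 / 2)) := by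
  have h : Integrable (fun t : ℝ => Real.exp (-(1/2) * t ^ 2)) :=
    integrable_exp_neg_mul_sq (by norm_num)
  have : (fun t : ℝ => (Real.sqrt (2 * Real.pi))⁻¹ * Real.exp (-t ^ 2 / 2))
      = fun t : ℝ => (Real.sqrt (2 * Real.pi))⁻¹ * Real.exp (-(1/2) * t ^ 2) := by
    funext t; ring_nf
  rw [this]
  exact h.const_mul _

lemma gauss_continuous :
    Continuous (fun t : ℝ => (Real.sqrt (2 * Real.pi))⁻¹ * Real.exp (-t ^ 2 / 2)) := by
  fun_prop

lemma hasDerivAt_stdNormalCDF (x : ℝ) :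
    HasDerivAt stdNormalCDF ((Real.sqrt (2 * Real.pi))⁻¹ * Real.exp (-x ^ 2 / 2)) x := by
  set f : ℝ → ℝ := fun t => (Real.sqrt (2 * Real.pi))⁻¹ * Real.exp (-t ^ 2 / 2) with hf
  have hi := gauss_integrable
  have h1 : HasDerivAt (fun y => stdNormalCDF 0 + ∫ t in (0:ℝ)..y, f t) (f x) x := by
    exact (intervalIntegral.integral_hasDerivAt_right (hi.intervalIntegrable)
      (gauss_continuous.stronglyMeasurableAtFilter _ _) gauss_continuous.continuousAt).const_add _
  refine h1.congr_of_eventuallyEq (Filter.Eventually.of_forall fun y => ?_)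
  have := intervalIntegral.integral_Iic_sub_Iic (μ := volume) (f := f)
    hi.integrableOn hi.integrableOn (a := 0) (b := y)
  show stdNormalCDF y = stdNormalCDF 0 + _
  unfold stdNormalCDF
  rw [← this]; ring

/- ### Derivative of r ↦ Φ(z/√(1+(z²-1)r)) -/

noncomputable def Gd (z r : ℝ) : ℝ :=
  (Real.sqrt (2 * Real.pi))⁻¹ *
    Real.exp (-(z / Real.sqrt (1 + (z ^ 2 - 1) * r)) ^ 2 / 2) *
    (-((z / Real.sqrt (1 + (z ^ 2 - 1) * r)) *
        ((z / Real.sqrt (1 + (z ^ 2 - 1) * r)) ^ 2 - 1)) / (2 * (1 - r)))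

lemma G_hasDeriv (z r : ℝ) (hD : 0 < 1 + (z ^ 2 - 1) * r) (hr : r < 1) :
    HasDerivAt (fun r => stdNormalCDF (z / Real.sqrt (1 + (z ^ 2 - 1) * r))) (Gd z r) r := by
  have hr' : (1:ℝ) - r ≠ 0 := by linarith
  set s := Real.sqrt (1 + (z ^ 2 - 1) * r) with hsdef
  have hspos : 0 < s := Real.sqrt_pos.mpr hD
  have hs2 : s ^ 2 = 1 + (z ^ 2 - 1) * r := Real.sq_sqrt hD.le
  have hlin : HasDerivAt (fun r : ℝ => 1 + (z ^ 2 - 1) * r) (z ^ 2 - 1) r := by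
    simpa using ((hasDerivAt_id r).const_mul (z ^ 2 - 1)).const_add 1
  have hsqrt : HasDerivAt (fun r : ℝ => Real.sqrt (1 + (z ^ 2 - 1) * r))
      ((z ^ 2 - 1) / (2 * s)) r := by
    have := (Real.hasDerivAt_sqrt (ne_of_gt hD)).comp r hlin
    refine this.congr_deriv ?_
    rw [← hsdef]; ring
  have hdiv : HasDerivAt (fun r : ℝ => z / Real.sqrt (1 + (z ^ 2 - 1) * r))
      ((0 * s - z * ((z ^ 2 - 1) / (2 * s))) / s ^ 2) r :=
    (hasDerivAt_const r z).div hsqrt (ne_of_gt hspos)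
  have hcomp := (hasDerivAt_stdNormalCDF (z / s)).comp r hdiv
  refine hcomp.congr_deriv ?_
  unfold Gd
  rw [← hsdef]
  have hid : -(z / s * ((z / s) ^ 2 - 1)) / (2 * (1 - r))
      = (0 * s - z * ((z ^ 2 - 1) / (2 * s))) / s ^ 2 := by
    field_simp
    linear_combination z * hs2
  rw [hid]

lemma arith_final (M N : ℝ) (hM : 0 < M) (hN : 2 ≤ N) :
    (M / (2 * (1 - 1/(2*N)))) * (1/(2*N) - 0) + (M / (2 * (1 - 1/N))) * (1/N - 1/(2*N))
      < M / 2 / (N - 1) := by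
  have h1 : (0:ℝ) < N := by linarith
  have hN0 : N ≠ 0 := ne_of_gt h1
  have hA : 2*N - 1 ≠ 0 := ne_of_gt (by linarith)
  have hB : N - 1 ≠ 0 := ne_of_gt (by linarith)
  have hu1 : 1 - 1/(2*N) ≠ 0 := by
    have : 1/(2*N) < 1 := by rw [div_lt_one (by linarith)]; linarith
    exact ne_of_gt (by linarith)
  have hu2 : 1 - 1/N ≠ 0 := by
    have : 1/N < 1 := by rw [div_lt_one (by linarith)]; linarith
    exact ne_of_gt (by linarith)
  have he1 : (M / (2 * (1 - 1/(2*N)))) * (1/(2*N) - 0) = M / (2 * (2*N - 1)) := by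
    rw [eq_div_iff (by nlinarith)]
    field_simp
    ring
  have he2 : (M / (2 * (1 - 1/N))) * (1/N - 1/(2*N)) = M / (4 * (N - 1)) := by
    rw [eq_div_iff (by nlinarith)]
    field_simp
    ring
  rw [he1, he2]
  have hdiff : M / 2 / (N - 1) - (M / (2 * (2*N - 1)) + M / (4 * (N - 1)))
      = M / (4 * (N - 1) * (2*N - 1)) := by
    field_simp
    ring
  have hpos : 0 < M / (4 * (N - 1) * (2*N - 1)) := by
    apply div_pos hM
    nlinarith
  linarith

theorem Phi_n_close_to_Phi (n : ℕ) (hn : 1 < n) (z : ℝ) :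
    |stdNormalCDF z - stdNormalCDF (z / Real.sqrt (1 + (z ^ 2 - 1) / n))| <
      ((1 + Real.sqrt 3 / 2 - 1 / 2) * Real.exp (-(1 + Real.sqrt 3 / 2)) *
        Real.sqrt ((1 + Real.sqrt 3 / 2) / Real.pi)) / (n - 1) := by
  have hN : (2:ℝ) ≤ (n:ℝ) := by exact_mod_cast hn
  set N := (n:ℝ) with hNdef
  have hNpos : (0:ℝ) < N := by linarith
  set M := (Real.sqrt (2 * Real.pi))⁻¹ * (Real.sqrt wc * (wc - 1) * Real.exp (-wc / 2))
    with hMdef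
  have hMpos : 0 < M := by
    have h1 : (1:ℝ) < wc := by unfold wc; linarith [sqrt3_lb]
    have h2 : 0 < Real.sqrt wc := Real.sqrt_pos.mpr (by linarith)
    have h3 : (0:ℝ) < Real.sqrt (2 * Real.pi) :=
      Real.sqrt_pos.mpr (by positivity)
    have h4 := Real.exp_pos (-wc / 2)
    rw [hMdef]
    exact mul_pos (inv_pos.mpr h3) (mul_pos (mul_pos h2 (by linarith)) h4)
  -- positivity of the inner expression on [0, 1/N]
  have hD : ∀ r ∈ Icc (0:ℝ) (1/N), 0 < 1 + (z ^ 2 - 1) * r := by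
    intro r hr
    obtain ⟨h0, h1⟩ := hr
    rcases le_or_gt 0 (z ^ 2 - 1) with hc | hc
    · nlinarith
    · have haux : 0 ≤ (1/N - r) * (-(z ^ 2 - 1)) :=
        mul_nonneg (by linarith) (by linarith)
      have hz : (0:ℝ) ≤ z ^ 2 := sq_nonneg z
      have hN1 : 0 < 1 + (z ^ 2 - 1) * (1/N) := by
        have : 1 + (z ^ 2 - 1) * (1/N) = (N + z ^ 2 - 1) / N := by field_simp; ring
        rw [this]
        apply div_pos (by nlinarith) hNpos
      nlinarith
  -- bound on the derivative
  have hbound : ∀ r ∈ Icc (0:ℝ) (1/N), |Gd z r| ≤ M / (2 * (1 - r)) := by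
    intro r hr
    obtain ⟨h0, h1⟩ := hr
    have hrlt : r < 1 := by
      have : 1/N ≤ 1/2 := by
        apply div_le_div_of_nonneg_left (by norm_num) (by norm_num) hN
      linarith
    have h1r : 0 < 1 - r := by linarith
    set u := z / Real.sqrt (1 + (z ^ 2 - 1) * r) with hudef
    have habs : |Gd z r| = (Real.sqrt (2 * Real.pi))⁻¹ * Real.exp (-u ^ 2 / 2) *
        (|u * (u ^ 2 - 1)| / (2 * (1 - r))) := by
      unfold Gd
      rw [← hudef, abs_mul, abs_mul, abs_div, abs_neg]
      rw [abs_of_pos (show (0:ℝ) < (Real.sqrt (2 * Real.pi))⁻¹ by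
        apply inv_pos.mpr; exact Real.sqrt_pos.mpr (by linarith [Real.pi_pos]))]
      rw [abs_of_pos (Real.exp_pos _), abs_of_pos (by linarith : (0:ℝ) < 2 * (1 - r))]
    rw [habs, hMdef, abs_mul]
    have hkey := key_ineq u
    have hsp : (0:ℝ) ≤ (Real.sqrt (2 * Real.pi))⁻¹ := by positivity
    have heq : (Real.sqrt (2 * Real.pi))⁻¹ * Real.exp (-u ^ 2 / 2) *
        (|u| * |u ^ 2 - 1| / (2 * (1 - r))) =
        ((Real.sqrt (2 * Real.pi))⁻¹ * (|u| * |u ^ 2 - 1| * Real.exp (-u ^ 2 / 2))) /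
          (2 * (1 - r)) := by ring
    rw [heq, div_le_div_iff_of_pos_right (by linarith : (0:ℝ) < 2 * (1 - r))]
    exact mul_le_mul_of_nonneg_left hkey hsp
  -- the two mean value estimates
  set G : ℝ → ℝ := fun r => stdNormalCDF (z / Real.sqrt (1 + (z ^ 2 - 1) * r)) with hGdef
  have hsub1 : Icc (0:ℝ) (1/(2*N)) ⊆ Icc (0:ℝ) (1/N) := by
    apply Icc_subset_Icc le_rfl
    apply div_le_div_of_nonneg_left (by norm_num) hNpos (by linarith)
  have hsub2 : Icc (1/(2*N)) (1/N) ⊆ Icc (0:ℝ) (1/N) := by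
    apply Icc_subset_Icc (by positivity) le_rfl
  have hderiv : ∀ x ∈ Icc (0:ℝ) (1/N), HasDerivAt G (Gd z x) x := by
    intro x hx
    apply G_hasDeriv z x (hD x hx)
    have : 1/N ≤ 1/2 := by
      apply div_le_div_of_nonneg_left (by norm_num) (by norm_num) hN
    have := hx.2
    linarith
  have h2N : 1/(2*N) ≤ 1/4 := by
    rw [div_le_div_iff₀ (by linarith) (by norm_num)]; linarith
  have hN4 : 1/N ≤ 1/2 := by
    rw [div_le_div_iff₀ (by linarith) (by norm_num)]; linarith
  have hest1 : ‖G (1/(2*N)) - G 0‖ ≤ (M / (2 * (1 - 1/(2*N)))) * (1/(2*N) - 0) := by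
    refine norm_image_sub_le_of_norm_deriv_le_segment'
      (f' := fun x => Gd z x)
      (fun x hx => ((hderiv x (hsub1 hx)).hasDerivWithinAt))
      (fun x hx => ?_) _ (right_mem_Icc.mpr (by positivity))
    obtain ⟨hx0, hx1⟩ := hx
    have hb := hbound x (hsub1 ⟨hx0, hx1.le⟩)
    rw [Real.norm_eq_abs]
    refine hb.trans ?_
    have hp1 : (0:ℝ) < 2 * (1 - x) := by linarith
    have hp2 : (0:ℝ) < 2 * (1 - 1/(2*N)) := by linarith
    rw [div_le_div_iff₀ hp1 hp2]
    have := mul_le_mul_of_nonneg_left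
      (show (2:ℝ) * (1 - 1/(2*N)) ≤ 2 * (1 - x) by linarith) hMpos.le
    linarith
  have hest2 : ‖G (1/N) - G (1/(2*N))‖ ≤ (M / (2 * (1 - 1/N))) * (1/N - 1/(2*N)) := by
    refine norm_image_sub_le_of_norm_deriv_le_segment'
      (f' := fun x => Gd z x)
      (fun x hx => ((hderiv x (hsub2 hx)).hasDerivWithinAt))
      (fun x hx => ?_) _ (right_mem_Icc.mpr (by
        rw [div_le_div_iff₀ (by linarith) hNpos]; linarith))
    obtain ⟨hx0, hx1⟩ := hx
    have hb := hbound x (hsub2 ⟨hx0, hx1.le⟩)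
    rw [Real.norm_eq_abs]
    refine hb.trans ?_
    have hp1 : (0:ℝ) < 2 * (1 - x) := by linarith
    have hp2 : (0:ℝ) < 2 * (1 - 1/N) := by linarith
    rw [div_le_div_iff₀ hp1 hp2]
    have := mul_le_mul_of_nonneg_left
      (show (2:ℝ) * (1 - 1/N) ≤ 2 * (1 - x) by linarith) hMpos.le
    linarith
  -- identify endpoints
  have hG0 : G 0 = stdNormalCDF z := by
    simp only [hGdef, mul_zero, add_zero, Real.sqrt_one, div_one]
  have hG1 : G (1/N) = stdNormalCDF (z / Real.sqrt (1 + (z ^ 2 - 1) / N)) := by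
    simp only [hGdef, mul_one_div]
  -- triangle inequality
  have htri : |stdNormalCDF z - stdNormalCDF (z / Real.sqrt (1 + (z ^ 2 - 1) / N))|
      ≤ (M / (2 * (1 - 1/(2*N)))) * (1/(2*N) - 0) + (M / (2 * (1 - 1/N))) * (1/N - 1/(2*N)) := by
    rw [← hG0, ← hG1]
    have t1 : G 0 - G (1/N) = (G 0 - G (1/(2*N))) + (G (1/(2*N)) - G (1/N)) := by ring
    calc |G 0 - G (1/N)|
        = |(G 0 - G (1/(2*N))) + (G (1/(2*N)) - G (1/N))| := by rw [← t1]
      _ ≤ |G 0 - G (1/(2*N))| + |G (1/(2*N)) - G (1/N)| := abs_add_le _ _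
      _ = |G (1/(2*N)) - G 0| + |G (1/N) - G (1/(2*N))| := by
          rw [abs_sub_comm (G 0) (G (1/(2*N))), abs_sub_comm (G (1/(2*N))) (G (1/N))]
      _ ≤ _ := by
          rw [← Real.norm_eq_abs, ← Real.norm_eq_abs]
          exact add_le_add hest1 hest2
  -- rewrite the goal constant
  have hCrw : (1 + Real.sqrt 3 / 2 - 1 / 2) * Real.exp (-(1 + Real.sqrt 3 / 2)) *
      Real.sqrt ((1 + Real.sqrt 3 / 2) / Real.pi) = M / 2 := by
    have h1 : (1:ℝ) + Real.sqrt 3 / 2 = wc / 2 := by unfold wc; ring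
    rw [h1]
    have h2 : wc / 2 / Real.pi = wc / (2 * Real.pi) := by ring
    rw [h2, Real.sqrt_div wc_nonneg, hMdef]
    have h3 : -(wc / 2) = -wc / 2 := by ring
    rw [h3]
    field_simp
  rw [hCrw]
  exact lt_of_le_of_lt htri (arith_final M N hMpos hN)
end
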